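/- Let A ∈ ℍ^{m×n} be a quaternion matrix with rank(A) = ν, let S₁ ∈ ℍ^{n×p} and T₁ ∈ ℍ^{q×m}, let Y ∈ ℍ^{p×q} be a {1}-inverse of T₁AS₁ (i.e. (T₁AS₁)·Y·(T₁AS₁) = T₁AS₁), and set X = S₁YT₁. Then AXA = A if and only if rank(T₁AS₁) = ν. -/

import Mathlib

set_option maxHeartbeats 1000000


open Matrix

noncomputable section

/-- The real quaternion division ring ℍ. -/
abbrev Quat : Type := Quaternion ℝ

/-- Left range `R_l(A) = {xA : x ∈ ℍ^{1×m}} ⊆ ℍ^{1×n}`. -/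
def leftRange {m n : ℕ} (A : Matrix (Fin m) (Fin n) Quat) : Set (Fin n → Quat) :=
  {y | ∃ x : Fin m → Quat, y = Matrix.vecMul x A}

/-- Left null space `N_l(A) = {x ∈ ℍ^{1×m} : xA = 0}`. -/
def leftNull {m n : ℕ} (A : Matrix (Fin m) (Fin n) Quat) : Set (Fin m → Quat) :=
  {x | Matrix.vecMul x A = 0}

/-- Right range `R_r(A) = {Ax : x ∈ ℍ^{n×1}} ⊆ ℍ^{m×1}`. -/
def rightRange {m n : ℕ} (A : Matrix (Fin m) (Fin n) Quat) : Set (Fin m → Quat) :=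
  {y | ∃ x : Fin n → Quat, y = Matrix.mulVec A x}

/-- Right null space `N_r(A) = {x ∈ ℍ^{n×1} : Ax = 0}`. -/
def rightNull {m n : ℕ} (A : Matrix (Fin m) (Fin n) Quat) : Set (Fin n → Quat) :=
  {x | Matrix.mulVec A x = 0}

/-- The rank of a quaternion matrix: the dimension of its left range
(the left ℍ-span of its rows) as a left ℍ-vector space. -/
def qRank {m n : ℕ} (A : Matrix (Fin m) (Fin n) Quat) : ℕ :=
  Module.finrank Quat (Submodule.span Quat (Set.range (fun i : Fin m => A i)))

namespace QRankAux

lemma qRank_eq {m n : ℕ} (M : Matrix (Fin m) (Fin n) Quat) :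
    qRank M = Module.finrank Quat (LinearMap.range M.vecMulLinear) := by
  rw [qRank, range_vecMulLinear]
  rfl

lemma vecMulLinear_mul {a m n : ℕ} (M : Matrix (Fin a) (Fin m) Quat)
    (N : Matrix (Fin m) (Fin n) Quat) :
    (M * N).vecMulLinear = N.vecMulLinear.comp M.vecMulLinear := by
  refine LinearMap.ext fun x => ?_
  simp [Matrix.vecMul_vecMul]

lemma rank_mul_le_left {a m n : ℕ} (M : Matrix (Fin a) (Fin m) Quat)
    (N : Matrix (Fin m) (Fin n) Quat) : qRank (M * N) ≤ qRank M := by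
  rw [qRank_eq, qRank_eq, vecMulLinear_mul, LinearMap.range_comp]
  exact Submodule.finrank_map_le _ _

lemma rank_mul_le_right {a m n : ℕ} (M : Matrix (Fin a) (Fin m) Quat)
    (N : Matrix (Fin m) (Fin n) Quat) : qRank (M * N) ≤ qRank N := by
  rw [qRank_eq, qRank_eq, vecMulLinear_mul]
  exact Submodule.finrank_mono (LinearMap.range_comp_le_range _ _)

lemma row_mem {m n : ℕ} (N : Matrix (Fin m) (Fin n) Quat) (i : Fin m) :
    N i ∈ LinearMap.range N.vecMulLinear := by
  rw [range_vecMulLinear]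
  exact Submodule.subset_span ⟨i, rfl⟩

lemma exists_left_factor {a m n : ℕ} (M : Matrix (Fin a) (Fin m) Quat)
    (N : Matrix (Fin m) (Fin n) Quat) (h : qRank (M * N) = qRank N) :
    ∃ C : Matrix (Fin m) (Fin a) Quat, C * (M * N) = N := by
  have hle : LinearMap.range (M * N).vecMulLinear ≤ LinearMap.range N.vecMulLinear := by
    rw [vecMulLinear_mul]; exact LinearMap.range_comp_le_range _ _
  have heq : LinearMap.range (M * N).vecMulLinear = LinearMap.range N.vecMulLinear :=
    Submodule.eq_of_le_of_finrank_le hle (by rw [← qRank_eq, ← qRank_eq, h])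
  have hrow : ∀ i, ∃ c : Fin a → Quat, c ᵥ* (M * N) = N i := by
    intro i
    have : N i ∈ LinearMap.range (M * N).vecMulLinear := by
      rw [heq]; exact row_mem N i
    obtain ⟨c, hc⟩ := this
    exact ⟨c, hc⟩
  choose c hc using hrow
  refine ⟨Matrix.of c, ?_⟩
  refine Matrix.ext fun i j => ?_
  have := congrFun (hc i) j
  simpa [Matrix.mul_apply, Matrix.vecMul, dotProduct] using this

lemma vecMul_injOn {m n p : ℕ} (A : Matrix (Fin m) (Fin n) Quat)
    (S : Matrix (Fin n) (Fin p) Quat) (h : qRank (A * S) = qRank A)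
    {v : Fin n → Quat} (hv : v ∈ LinearMap.range A.vecMulLinear)
    (h0 : v ᵥ* S = 0) : v = 0 := by
  set P := LinearMap.range A.vecMulLinear with hP
  have hmap : P.map S.vecMulLinear = LinearMap.range (A * S).vecMulLinear := by
    rw [vecMulLinear_mul, LinearMap.range_comp]
  have hfin : Module.finrank Quat P = Module.finrank Quat (P.map S.vecMulLinear) := by
    rw [hmap, ← qRank_eq, ← qRank_eq, h]
  have hsurj := LinearMap.submoduleMap_surjective S.vecMulLinear P
  have hinj : Function.Injective (S.vecMulLinear.submoduleMap P) :=
    (LinearMap.injective_iff_surjective_of_finrank_eq_finrank hfin).2 hsurj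
  have hz : S.vecMulLinear.submoduleMap P ⟨v, hv⟩ = S.vecMulLinear.submoduleMap P 0 := by
    rw [map_zero]
    exact Subtype.ext (by simpa using h0)
  simpa using congrArg Subtype.val (hinj hz)

end QRankAux

/-- Theorem 3.4 (a). -/
theorem stmt6 {m n p q ν : ℕ} (A : Matrix (Fin m) (Fin n) Quat) (hA : qRank A = ν)
    (S₁ : Matrix (Fin n) (Fin p) Quat) (T₁ : Matrix (Fin q) (Fin m) Quat)
    (Y : Matrix (Fin p) (Fin q) Quat)
    (hY : (T₁ * A * S₁) * Y * (T₁ * A * S₁) = T₁ * A * S₁)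
    (X : Matrix (Fin n) (Fin m) Quat) (hX : X = S₁ * Y * T₁) :
    A * X * A = A ↔ qRank (T₁ * A * S₁) = ν := by
  subst hX
  open QRankAux in
  constructor
  · intro h
    -- h : A * (S₁ * Y * T₁) * A = A
    have h1 : qRank (T₁ * A) ≤ ν := hA ▸ rank_mul_le_right T₁ A
    have h2 : ν ≤ qRank (T₁ * A) := by
      have hfac : (A * S₁ * Y) * (T₁ * A) = A := by
        conv_rhs => rw [← h]
        simp only [Matrix.mul_assoc]
      calc ν = qRank A := hA.symm
        _ = qRank ((A * S₁ * Y) * (T₁ * A)) := by rw [hfac]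
        _ ≤ qRank (T₁ * A) := rank_mul_le_right _ _
    have h3 : qRank (T₁ * A * S₁) ≤ qRank (T₁ * A) := rank_mul_le_left _ _
    have h4 : qRank (T₁ * A) ≤ qRank (T₁ * A * S₁) := by
      have hfac : (T₁ * A * S₁) * (Y * (T₁ * A)) = T₁ * A := by
        conv_rhs => rw [← h]
        simp only [Matrix.mul_assoc]
      calc qRank (T₁ * A) = qRank ((T₁ * A * S₁) * (Y * (T₁ * A))) := by rw [hfac]
        _ ≤ qRank (T₁ * A * S₁) := rank_mul_le_left _ _
    omega
  · intro h
    have hTA_le : qRank (T₁ * A) ≤ qRank A := rank_mul_le_right T₁ A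
    have hB_le : qRank (T₁ * A * S₁) ≤ qRank (T₁ * A) := rank_mul_le_left _ _
    have hTA : qRank (T₁ * A) = qRank A := by omega
    have hAS_le : qRank (A * S₁) ≤ qRank A := rank_mul_le_left A S₁
    have hB_le2 : qRank (T₁ * A * S₁) ≤ qRank (A * S₁) := by
      have : T₁ * A * S₁ = T₁ * (A * S₁) := Matrix.mul_assoc _ _ _
      rw [this]; exact rank_mul_le_right _ _
    have hAS : qRank (A * S₁) = qRank A := by omega
    obtain ⟨C, hC⟩ := exists_left_factor T₁ A hTA
    -- From hY, multiplying by C on the left: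
    have key : A * S₁ * Y * (T₁ * A) * S₁ = A * S₁ := by
      calc A * S₁ * Y * (T₁ * A) * S₁ = (C * (T₁ * A)) * S₁ * Y * (T₁ * A) * S₁ := by rw [hC]
        _ = C * ((T₁ * A * S₁) * Y * (T₁ * A * S₁)) := by simp only [Matrix.mul_assoc]
        _ = C * (T₁ * A * S₁) := by rw [hY]
        _ = (C * (T₁ * A)) * S₁ := by simp only [Matrix.mul_assoc]
        _ = A * S₁ := by rw [hC]
    -- Now show A * (S₁ * Y * T₁) * A = A row by row.
    have hE : ∀ i : Fin m, (A * (S₁ * Y * T₁) * A) i = A i := by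
      intro i
      set E := A * (S₁ * Y * T₁) * A with hEdef
      have hErow : E i ∈ LinearMap.range A.vecMulLinear := by
        have : E = (A * (S₁ * Y * T₁)) * A := by rw [hEdef]
        refine ⟨(A * (S₁ * Y * T₁)) i, ?_⟩
        rw [this]
        funext j
        simp [Matrix.mul_apply, Matrix.vecMul, dotProduct]
      have hArow : A i ∈ LinearMap.range A.vecMulLinear := row_mem A i
      have hsub : E i - A i ∈ LinearMap.range A.vecMulLinear :=
        Submodule.sub_mem _ hErow hArow
      have hES : E * S₁ = A * S₁ := by
        calc E * S₁ = A * S₁ * Y * (T₁ * A) * S₁ := by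
              rw [hEdef]; simp only [Matrix.mul_assoc]
          _ = A * S₁ := key
      have h0 : (E i - A i) ᵥ* S₁ = 0 := by
        have h1 : (E i) ᵥ* S₁ = (E * S₁) i := by
          funext j; simp [Matrix.mul_apply, Matrix.vecMul, dotProduct]
        have h2 : (A i) ᵥ* S₁ = (A * S₁) i := by
          funext j; simp [Matrix.mul_apply, Matrix.vecMul, dotProduct]
        rw [Matrix.sub_vecMul, h1, h2, hES, sub_self]
      have := vecMul_injOn A S₁ hAS hsub h0
      have := sub_eq_zero.mp this
      exact this
    refine Matrix.ext fun i j => ?_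
    exact congrFun (hE i) j
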